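/- Let c be a directed cycle of length ℓ ≥ 3 on a vertex set S, let I be a multiset of ichords of c with |I| ≤ ℓ − 2 (each ichord is an additional parallel copy of an edge of c, with at most one extra copy per edge of c), and let R be a set of rays of c with |R| ≤ 1, each ray being a directed edge with exactly one endpoint in S. Assume that in the multigraph D consisting of the edges of c, the ichords I, and the rays R, every vertex has in-degree at most 2 and out-degree at most 2. Then for any assignment of a color (out of two colors) to the ray (if present), there is an extension to a 2-coloring of the edges of c and the ichords in I such that the resulting 2-coloring of all of D is a path-2-coloring. -/

import Mathlib

open Finset

/-- Out-degree of `v` in the edge set `P`. -/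
def outdeg {V : Type*} [DecidableEq V] (P : Finset (V × V)) (v : V) : ℕ :=
  (P.filter fun e => e.1 = v).card

/-- In-degree of `v` in the edge set `P`. -/
def indeg {V : Type*} [DecidableEq V] (P : Finset (V × V)) (v : V) : ℕ :=
  (P.filter fun e => e.2 = v).card

/-- `P` is a vertex-disjoint union of simple directed paths: every vertex has
in-degree ≤ 1 and out-degree ≤ 1 and there is no directed cycle (every
subset in which all vertices are balanced is empty). -/
def IsPathSystem {V : Type*} [DecidableEq V] (P : Finset (V × V)) : Prop :=
  (∀ v, outdeg P v ≤ 1) ∧ (∀ v, indeg P v ≤ 1) ∧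
  ∀ T ⊆ P, (∀ v, outdeg T v = indeg T v) → T = ∅

/-- `c` is a directed cycle on vertex set `S`: its edges are `(v, σ v)` for `v ∈ S`,
for a cyclic permutation `σ` with support `S`. -/
def IsCycleOn {V : Type*} [Fintype V] [DecidableEq V]
    (c : Finset (V × V)) (S : Finset V) : Prop :=
  ∃ σ : Equiv.Perm V, σ.IsCycle ∧ σ.support = S ∧ c = S.image fun v => (v, σ v)

/-- The set of edges of the multigraph `c ⊎ I ⊎ R` (cycle edges, ichords, rays)
receiving color `b`, where `χ1` colors the primary copies of the cycle edges,
`χ2` the ichord copies, and `χr` the rays. -/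
def colorClass {V : Type*} [DecidableEq V] (c I R : Finset (V × V))
    (χ1 χ2 χr : V × V → Bool) (b : Bool) : Finset (V × V) :=
  (c.filter fun e => χ1 e = b) ∪ (I.filter fun e => χ2 e = b) ∪
    (R.filter fun e => χr e = b)

/-- A 2-coloring of the multigraph consisting of the cycle edges `c`, the ichords
`I ⊆ c` (parallel copies) and the rays `R` is a path-2-coloring when parallel
copies get distinct colors and each color class is a vertex-disjoint union of
simple directed paths. -/
def IsPath2ColoringD {V : Type*} [DecidableEq V] (c I R : Finset (V × V))
    (χ1 χ2 χr : V × V → Bool) : Prop :=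
  (∀ e ∈ I, χ2 e ≠ χ1 e) ∧ ∀ b : Bool, IsPathSystem (colorClass c I R χ1 χ2 χr b)

section Aux
variable {V : Type*} [DecidableEq V]
lemma outdeg_mono {P Q : Finset (V × V)} (h : P ⊆ Q) (v : V) : outdeg P v ≤ outdeg Q v :=
  Finset.card_le_card (Finset.filter_subset_filter _ h)
lemma indeg_mono {P Q : Finset (V × V)} (h : P ⊆ Q) (v : V) : indeg P v ≤ indeg Q v :=
  Finset.card_le_card (Finset.filter_subset_filter _ h)
lemma outdeg_union_le (P Q : Finset (V × V)) (v : V) :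
    outdeg (P ∪ Q) v ≤ outdeg P v + outdeg Q v := by
  classical
  rw [outdeg, Finset.filter_union]; exact Finset.card_union_le _ _
lemma indeg_union_le (P Q : Finset (V × V)) (v : V) :
    indeg (P ∪ Q) v ≤ indeg P v + indeg Q v := by
  classical
  rw [indeg, Finset.filter_union]; exact Finset.card_union_le _ _
lemma outdeg_pos {P : Finset (V × V)} {e : V × V} (he : e ∈ P) : 1 ≤ outdeg P e.1 :=
  Finset.card_pos.2 ⟨e, Finset.mem_filter.2 ⟨he, rfl⟩⟩
lemma indeg_pos {P : Finset (V × V)} {e : V × V} (he : e ∈ P) : 1 ≤ indeg P e.2 :=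
  Finset.card_pos.2 ⟨e, Finset.mem_filter.2 ⟨he, rfl⟩⟩
lemma outdeg_eq_zero {P : Finset (V × V)} {v : V} (h : ∀ e ∈ P, e.1 ≠ v) :
    outdeg P v = 0 := by
  rw [outdeg, Finset.card_eq_zero, Finset.filter_eq_empty_iff]; exact h
lemma indeg_eq_zero {P : Finset (V × V)} {v : V} (h : ∀ e ∈ P, e.2 ≠ v) :
    indeg P v = 0 := by
  rw [indeg, Finset.card_eq_zero, Finset.filter_eq_empty_iff]; exact h
lemma outdeg_le_card (P : Finset (V × V)) (v : V) : outdeg P v ≤ P.card :=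
  Finset.card_le_card (Finset.filter_subset _ _)
lemma indeg_le_card (P : Finset (V × V)) (v : V) : indeg P v ≤ P.card :=
  Finset.card_le_card (Finset.filter_subset _ _)
end Aux

lemma key {V : Type*} [Fintype V] [DecidableEq V]
    (σ : Equiv.Perm V) (hσ : σ.IsCycle)
    (S : Finset V) (hsupp : σ.support = S)
    (c : Finset (V × V)) (hcdef : c = S.image fun v => (v, σ v))
    (I : Finset (V × V)) (hI : I ⊆ c)
    (R : Finset (V × V))
    (hR : ∀ e ∈ R, (e.1 ∈ S ∧ e.2 ∉ S) ∨ (e.1 ∉ S ∧ e.2 ∈ S))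
    (hR1 : R.card ≤ 1)
    (χr : V × V → Bool) (b0 : Bool) (estar : V × V)
    (hes : estar ∈ c) (hesI : estar ∉ I)
    (hray : ∀ r ∈ R, χr r = b0 ∧ (r.1 ∈ S → estar = (r.1, σ r.1)) ∧
      (r.2 ∈ S → estar = (σ⁻¹ r.2, r.2)))
    (hmiss : ∃ e' ∈ c, e' ∉ I ∧ e' ≠ estar) :
    ∃ χ1 χ2 : V × V → Bool, IsPath2ColoringD c I R χ1 χ2 χr := by
  classical
  set χ1 : V × V → Bool := fun e => if e = estar then !b0 else b0 with hχ1
  refine ⟨χ1, fun e => !(χ1 e), ?_, ?_⟩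
  · intro e _; simp
  intro b
  -- basic facts about c
  have hmemc : ∀ e : V × V, e ∈ c ↔ e.1 ∈ S ∧ e.2 = σ e.1 := by
    intro e
    constructor
    · intro he
      rw [hcdef, Finset.mem_image] at he
      obtain ⟨v, hv, hve⟩ := he
      cases hve; exact ⟨hv, rfl⟩
    · intro ⟨h1, h2⟩
      rw [hcdef, Finset.mem_image]
      exact ⟨e.1, h1, by rw [← h2]⟩
  have hmemS : ∀ v ∈ S, (v, σ v) ∈ c := fun v hv => (hmemc _).2 ⟨hv, rfl⟩
  have hσS : ∀ v, v ∈ S ↔ σ v ∈ S := by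
    intro v
    rw [← hsupp, Equiv.Perm.apply_mem_support]
  have hcR : ∀ e ∈ c, e ∉ R := by
    intro e hec heR
    obtain ⟨h1, h2⟩ := (hmemc e).1 hec
    have h2S : e.2 ∈ S := h2 ▸ (hσS e.1).1 h1
    rcases hR e heR with ⟨_, h⟩ | ⟨h, _⟩
    · exact h h2S
    · exact h h1
  have hesc := (hmemc estar).1 hes
  -- the cycle part of the color class
  set Cb : Finset (V × V) := c.filter (fun e => e ∈ I ∨ χ1 e = b) with hCb
  set Rb : Finset (V × V) := R.filter (fun e => χr e = b) with hRb
  have hsub : colorClass c I R χ1 (fun e => !(χ1 e)) χr b ⊆ Cb ∪ Rb := by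
    intro e he
    rw [colorClass, Finset.mem_union, Finset.mem_union] at he
    rw [Finset.mem_union]
    rcases he with (he | he) | he
    · rw [Finset.mem_filter] at he
      exact Or.inl (Finset.mem_filter.2 ⟨he.1, Or.inr he.2⟩)
    · rw [Finset.mem_filter] at he
      exact Or.inl (Finset.mem_filter.2 ⟨hI he.1, Or.inl he.1⟩)
    · exact Or.inr he
  -- uniqueness of cycle edges at a vertex
  have hcout : ∀ e ∈ c, ∀ v : V, e.1 = v → e = (v, σ v) := by
    intro e hec v hv
    obtain ⟨h1, h2⟩ := (hmemc e).1 hec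
    subst hv
    exact Prod.ext rfl h2
  have hcin : ∀ e ∈ c, ∀ v : V, e.2 = v → e = (σ⁻¹ v, v) := by
    intro e hec v hv
    obtain ⟨h1, h2⟩ := (hmemc e).1 hec
    subst hv
    have : σ⁻¹ e.2 = e.1 := by rw [h2]; simp
    exact Prod.ext this.symm rfl
  have houtc1 : ∀ v, outdeg c v ≤ 1 := by
    intro v
    rw [outdeg]
    refine le_trans (Finset.card_le_card ?_) (Finset.card_singleton (v, σ v)).le
    intro e he
    rw [Finset.mem_filter] at he
    rw [Finset.mem_singleton]
    exact hcout e he.1 v he.2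
  have hinc1 : ∀ v, indeg c v ≤ 1 := by
    intro v
    rw [indeg]
    refine le_trans (Finset.card_le_card ?_) (Finset.card_singleton (σ⁻¹ v, v)).le
    intro e he
    rw [Finset.mem_filter] at he
    rw [Finset.mem_singleton]
    exact hcin e he.1 v he.2
  have hχes : χ1 estar = !b0 := by simp [hχ1]
  have hχne : ∀ e, e ≠ estar → χ1 e = b0 := by intro e he; simp [hχ1, he]
  refine ⟨?_, ?_, ?_⟩
  · -- outdegree ≤ 1
    intro v
    refine le_trans (le_trans (outdeg_mono hsub v) (outdeg_union_le _ _ v)) ?_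
    by_cases hrv : ∃ r ∈ Rb, r.1 = v
    · obtain ⟨r, hrRb, hr1⟩ := hrv
      rw [hRb, Finset.mem_filter] at hrRb
      obtain ⟨hrR, hrb⟩ := hrRb
      have hb0 : b = b0 := by rw [← hrb, (hray r hrR).1]
      have hC0 : outdeg Cb v = 0 := by
        apply outdeg_eq_zero
        intro e he hev
        rw [hCb, Finset.mem_filter] at he
        obtain ⟨hec, hor⟩ := he
        have h1S : e.1 ∈ S := ((hmemc e).1 hec).1
        rcases hR r hrR with ⟨hr1S, _⟩ | ⟨hr1S, _⟩
        · have : e = (r.1, σ r.1) := hcout e hec v hev ▸ by rw [hr1]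
          have hee : e = estar := by rw [this, ← (hray r hrR).2.1 hr1S]
          rcases hor with h | h
          · exact hesI (hee ▸ h)
          · rw [hee, hχes, hb0] at h
            exact Bool.not_ne_self b0 h
        · exact hr1S (hr1 ▸ hev ▸ h1S)
      rw [hC0]
      simpa using le_trans (outdeg_le_card Rb v) (le_trans (Finset.card_le_card (Finset.filter_subset _ _)) hR1)
    · have hRb0 : outdeg Rb v = 0 := by
        apply outdeg_eq_zero
        intro e he hev
        exact hrv ⟨e, he, hev⟩
      rw [hRb0]
      simpa using le_trans (outdeg_mono (Finset.filter_subset _ c) v) (houtc1 v)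
  · -- indegree ≤ 1
    intro v
    refine le_trans (le_trans (indeg_mono hsub v) (indeg_union_le _ _ v)) ?_
    by_cases hrv : ∃ r ∈ Rb, r.2 = v
    · obtain ⟨r, hrRb, hr2⟩ := hrv
      rw [hRb, Finset.mem_filter] at hrRb
      obtain ⟨hrR, hrb⟩ := hrRb
      have hb0 : b = b0 := by rw [← hrb, (hray r hrR).1]
      have hC0 : indeg Cb v = 0 := by
        apply indeg_eq_zero
        intro e he hev
        rw [hCb, Finset.mem_filter] at he
        obtain ⟨hec, hor⟩ := he
        have h2S : e.2 ∈ S := by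
          obtain ⟨h1, h2⟩ := (hmemc e).1 hec
          exact h2 ▸ (hσS e.1).1 h1
        rcases hR r hrR with ⟨_, hr2S⟩ | ⟨_, hr2S⟩
        · exact hr2S (hr2 ▸ hev ▸ h2S)
        · have : e = (σ⁻¹ r.2, r.2) := hcin e hec v hev ▸ by rw [hr2]
          have hee : e = estar := by rw [this, ← (hray r hrR).2.2 hr2S]
          rcases hor with h | h
          · exact hesI (hee ▸ h)
          · rw [hee, hχes, hb0] at h
            exact Bool.not_ne_self b0 h
      rw [hC0]
      simpa using le_trans (indeg_le_card Rb v) (le_trans (Finset.card_le_card (Finset.filter_subset _ _)) hR1)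
    · have hRb0 : indeg Rb v = 0 := by
        apply indeg_eq_zero
        intro e he hev
        exact hrv ⟨e, he, hev⟩
      rw [hRb0]
      simpa using le_trans (indeg_mono (Finset.filter_subset _ c) v) (hinc1 v)
  · -- acyclicity
    intro T hT hbal
    by_contra hTne
    obtain ⟨e₀, he₀⟩ := Finset.nonempty_iff_ne_empty.2 hTne
    have hTsub : T ⊆ Cb ∪ Rb := fun e he => hsub (hT he)
    have hTnoR : ∀ r ∈ R, r ∉ T := by
      intro r hrR hrT
      have hRsingle : ∀ e ∈ R, e = r := by
        intro e he
        exact Finset.card_le_one.1 hR1 e he r hrR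
      rcases hR r hrR with ⟨h1S, h2S⟩ | ⟨h1S, h2S⟩
      · -- outray: at r.2 ∉ S, indeg ≥ 1 but outdeg = 0
        have h1 : 1 ≤ indeg T r.2 := indeg_pos hrT
        have h0 : outdeg T r.2 = 0 := by
          apply outdeg_eq_zero
          intro e heT hev
          rcases Finset.mem_union.1 (hTsub heT) with he | he
          · have := ((hmemc e).1 (Finset.mem_filter.1 he).1).1
            exact h2S (hev ▸ this)
          · have := hRsingle e (Finset.mem_filter.1 he).1
            rw [this] at hev
            have : r.2 ∈ S := hev ▸ h1S
            exact h2S this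
        have := hbal r.2
        omega
      · have h1 : 1 ≤ outdeg T r.1 := outdeg_pos hrT
        have h0 : indeg T r.1 = 0 := by
          apply indeg_eq_zero
          intro e heT hev
          rcases Finset.mem_union.1 (hTsub heT) with he | he
          · have hec := (Finset.mem_filter.1 he).1
            obtain ⟨hh1, hh2⟩ := (hmemc e).1 hec
            have : e.2 ∈ S := hh2 ▸ (hσS e.1).1 hh1
            exact h1S (hev ▸ this)
          · have := hRsingle e (Finset.mem_filter.1 he).1
            rw [this] at hev
            have : r.1 ∈ S := hev ▸ h2S
            exact h1S this
        have := hbal r.1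
        omega
    have hTc : T ⊆ c := by
      intro e he
      rcases Finset.mem_union.1 (hTsub he) with h | h
      · exact (Finset.mem_filter.1 h).1
      · exact absurd he (hTnoR e (Finset.mem_filter.1 h).1)
    -- membership iff
    have hiff : ∀ v, ((v, σ v) ∈ T ↔ (σ⁻¹ v, v) ∈ T) := by
      intro v
      have hout : (v, σ v) ∈ T ↔ 0 < outdeg T v := by
        constructor
        · intro h; exact outdeg_pos h
        · intro h
          obtain ⟨e, he⟩ := Finset.card_pos.1 h
          rw [Finset.mem_filter] at he
          exact hcout e (hTc he.1) v he.2 ▸ he.1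
      have hin : (σ⁻¹ v, v) ∈ T ↔ 0 < indeg T v := by
        constructor
        · intro h; exact indeg_pos h
        · intro h
          obtain ⟨e, he⟩ := Finset.card_pos.1 h
          rw [Finset.mem_filter] at he
          exact hcin e (hTc he.1) v he.2 ▸ he.1
      rw [hout, hin, hbal v]
    -- invariant set
    set A : Finset V := S.filter (fun v => (v, σ v) ∈ T) with hA
    have hAinv : ∀ v ∈ A, σ v ∈ A := by
      intro v hv
      rw [hA, Finset.mem_filter] at hv ⊢
      refine ⟨(hσS v).1 hv.1, ?_⟩
      rw [hiff (σ v)]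
      simpa using hv.2
    have hApow : ∀ n : ℕ, ∀ v ∈ A, (σ ^ n) v ∈ A := by
      intro n
      induction n with
      | zero => simpa using fun v hv => hv
      | succ k ih =>
        intro v hv
        have hstep : (σ ^ (k+1)) v = σ ((σ ^ k) v) := by
          rw [pow_succ']
          simp [Equiv.Perm.mul_apply]
        rw [hstep]
        exact hAinv _ (ih v hv)
    -- e₀.1 ∈ A
    have he₀c : e₀ ∈ c := hTc he₀
    obtain ⟨he₀1, he₀2⟩ := (hmemc e₀).1 he₀c
    have he₀A : e₀.1 ∈ A := by
      rw [hA, Finset.mem_filter]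
      refine ⟨he₀1, ?_⟩
      have : e₀ = (e₀.1, σ e₀.1) := Prod.ext rfl he₀2
      exact this ▸ he₀
    -- S ⊆ A by cycle transitivity
    have hSA : S ⊆ A := by
      intro s hs
      have hx : σ e₀.1 ≠ e₀.1 := by
        rw [← Equiv.Perm.mem_support, hsupp]; exact he₀1
      have hy : σ s ≠ s := by
        rw [← Equiv.Perm.mem_support, hsupp]; exact hs
      obtain ⟨i, hi⟩ := hσ.exists_pow_eq hx hy
      exact hi ▸ hApow i e₀.1 he₀A
    -- hence c ⊆ T
    have hcT : c ⊆ T := by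
      intro e he
      obtain ⟨h1, h2⟩ := (hmemc e).1 he
      have : e = (e.1, σ e.1) := Prod.ext rfl h2
      rw [this]
      exact (Finset.mem_filter.1 (hSA h1)).2
    -- missing edge
    obtain ⟨e', he'c, he'I, he'ne⟩ := hmiss
    have : ∃ f ∈ c, f ∉ colorClass c I R χ1 (fun e => !(χ1 e)) χr b := by
      by_cases hb : b = b0
      · refine ⟨estar, hes, ?_⟩
        intro hmem
        rw [colorClass, Finset.mem_union, Finset.mem_union] at hmem
        rcases hmem with (h | h) | h
        · have := (Finset.mem_filter.1 h).2
          rw [hχes, hb] at this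
          exact Bool.not_ne_self b0 this
        · exact hesI (Finset.mem_filter.1 h).1
        · exact hcR estar hes (Finset.mem_filter.1 h).1
      · refine ⟨e', he'c, ?_⟩
        intro hmem
        rw [colorClass, Finset.mem_union, Finset.mem_union] at hmem
        rcases hmem with (h | h) | h
        · have := (Finset.mem_filter.1 h).2
          rw [hχne e' he'ne] at this
          exact hb this.symm
        · exact he'I (Finset.mem_filter.1 h).1
        · exact hcR e' he'c (Finset.mem_filter.1 h).1
    obtain ⟨f, hfc, hfn⟩ := this
    exact hfn (hT (hcT hfc))

/-- Let `c` be a directed cycle of length `ℓ ≥ 3` on `S`, `I ⊆ c` ichords with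
`|I| ≤ ℓ − 2`, and `R` a set of at most one ray (an edge with exactly one
endpoint in `S`), with all in/out-degrees in `c ⊎ I ⊎ R` at most 2. Then every
coloring of the ray (if present) extends to a path-2-coloring of the whole
multigraph. -/
theorem stmt6 {V : Type*} [Fintype V] [DecidableEq V]
    (S : Finset V) (c : Finset (V × V)) (ℓ : ℕ)
    (hc : IsCycleOn c S) (hlen : S.card = ℓ) (h3 : 3 ≤ ℓ)
    (I : Finset (V × V)) (hI : I ⊆ c) (hIcard : I.card ≤ ℓ - 2)
    (R : Finset (V × V))
    (hR : ∀ e ∈ R, (e.1 ∈ S ∧ e.2 ∉ S) ∨ (e.1 ∉ S ∧ e.2 ∈ S))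
    (hR1 : R.card ≤ 1)
    (hdeg : ∀ v : V, outdeg c v + outdeg I v + outdeg R v ≤ 2 ∧
                     indeg c v + indeg I v + indeg R v ≤ 2)
    (χr : V × V → Bool) :
    ∃ χ1 χ2 : V × V → Bool, IsPath2ColoringD c I R χ1 χ2 χr := by
  classical
  obtain ⟨σ, hσ, hsupp, hcdef⟩ := hc
  have hccard : c.card = ℓ := by
    rw [hcdef, Finset.card_image_of_injective _ (fun a b h => congrArg Prod.fst h), hlen]
  have hmemS : ∀ v ∈ S, (v, σ v) ∈ c := by
    intro v hv
    rw [hcdef, Finset.mem_image]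
    exact ⟨v, hv, rfl⟩
  -- helper: from a special edge not in I we extract a second missing edge
  have hmissgen : ∀ estar : V × V, ∃ e' ∈ c, e' ∉ I ∧ e' ≠ estar := by
    intro estar
    have hcard : (insert estar I).card < c.card := by
      have := Finset.card_insert_le estar I
      omega
    have : ¬ c ⊆ insert estar I := fun h => absurd (Finset.card_le_card h) (by omega)
    obtain ⟨e', he'c, he'⟩ := Finset.not_subset.1 this
    rw [Finset.mem_insert] at he'
    push_neg at he'
    exact ⟨e', he'c, he'.2, he'.1⟩
  rcases R.eq_empty_or_nonempty with hRe | ⟨r, hrR⟩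
  · -- no ray
    have hne : ¬ c ⊆ I := by
      intro h
      have := Finset.card_le_card h
      omega
    obtain ⟨estar, hesc, hesI⟩ := Finset.not_subset.1 hne
    exact key σ hσ S hsupp c hcdef I hI R hR hR1 χr true estar hesc hesI
      (by simp [hRe]) (hmissgen estar)
  · have hRsingle : ∀ e ∈ R, e = r := fun e he => Finset.card_le_one.1 hR1 e he r hrR
    rcases hR r hrR with ⟨h1S, h2S⟩ | ⟨h1S, h2S⟩
    · -- outray
      set estar : V × V := (r.1, σ r.1) with hestar
      have hesc : estar ∈ c := hmemS r.1 h1S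
      have hesI : estar ∉ I := by
        intro hmem
        have h1 : 1 ≤ outdeg c r.1 := outdeg_pos (e := estar) hesc
        have h2 : 1 ≤ outdeg I r.1 := outdeg_pos (e := estar) hmem
        have h3' : 1 ≤ outdeg R r.1 := outdeg_pos hrR
        have := (hdeg r.1).1
        omega
      refine key σ hσ S hsupp c hcdef I hI R hR hR1 χr (χr r) estar hesc hesI ?_ (hmissgen estar)
      intro r' hr'
      rw [hRsingle r' hr']
      exact ⟨rfl, fun _ => rfl, fun h => absurd h h2S⟩
    · -- inray
      set estar : V × V := (σ⁻¹ r.2, r.2) with hestar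
      have hesc : estar ∈ c := by
        have hw : σ⁻¹ r.2 ∈ S := by
          rw [← hsupp, ← Equiv.Perm.support_inv, Equiv.Perm.apply_mem_support,
            Equiv.Perm.support_inv, hsupp]
          exact h2S
        have := hmemS _ hw
        rwa [show σ (σ⁻¹ r.2) = r.2 from σ.apply_symm_apply r.2] at this
      have hesI : estar ∉ I := by
        intro hmem
        have h1 : 1 ≤ indeg c r.2 := indeg_pos (e := estar) hesc
        have h2 : 1 ≤ indeg I r.2 := indeg_pos (e := estar) hmem
        have h3' : 1 ≤ indeg R r.2 := indeg_pos hrR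
        have := (hdeg r.2).2
        omega
      refine key σ hσ S hsupp c hcdef I hI R hR hR1 χr (χr r) estar hesc hesI ?_ (hmissgen estar)
      intro r' hr'
      rw [hRsingle r' hr']
      exact ⟨rfl, fun h => absurd h h1S, fun _ => rfl⟩
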